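/- Let R = K[x₁,...,xₙ] be a polynomial ring over a field K and let f₁,...,fₙ₊₁ be a cryptographic semi-regular sequence of homogeneous polynomials of degrees d₁ ≤ ... ≤ d_{n+1} with d_{n+1} ≤ d₁ + ... + dₙ − n. Then the Hilbert series of R/(f₁,...,f_{n+1}), namely [∏_{i=1}^{n+1}(1−z^{d_i})/(1−z)^n], is a polynomial of degree at most ⌊(d₁+...+d_{n+1}−n−1)/2⌋. -/

import Mathlib

open Finset

namespace SemiregularAux

/-- Integer-indexed coefficient function of a power series. -/
noncomputable def sq (f : PowerSeries ℚ) (k : ℤ) : ℚ :=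
  if 0 ≤ k then PowerSeries.coeff (R := ℚ) k.toNat f else 0

lemma sq_natCast (f : PowerSeries ℚ) (m : ℕ) : sq f m = PowerSeries.coeff (R := ℚ) m f := by
  simp [sq]

/-- The geometric sum `1 + X + ⋯ + X^(e-1)` as a power series. -/
noncomputable def stepS (e : ℕ) : PowerSeries ℚ := ∑ j ∈ Finset.range e, PowerSeries.X ^ j

lemma sq_mul_stepS (f : PowerSeries ℚ) (e : ℕ) (k : ℤ) :
    sq (f * stepS e) k = ∑ j ∈ Finset.range e, sq f (k - j) := by
  by_cases hk : 0 ≤ k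
  · rw [sq, if_pos hk, stepS, Finset.mul_sum, map_sum]
    refine Finset.sum_congr rfl fun j hj => ?_
    rw [PowerSeries.coeff_mul_X_pow']
    by_cases hle : j ≤ k.toNat
    · rw [if_pos hle, sq, if_pos (by omega)]
      have hnat : (k - (j : ℤ)).toNat = k.toNat - j := by omega
      rw [hnat]
    · rw [if_neg hle, sq, if_neg (by omega)]
  · rw [sq, if_neg hk]
    refine (Finset.sum_eq_zero fun j _ => ?_).symm
    rw [sq, if_neg (by omega)]

lemma one_sub_X_mul_stepS (e : ℕ) :
    (1 - PowerSeries.X : PowerSeries ℚ) * stepS e = 1 - PowerSeries.X ^ e := by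
  have := geom_sum_mul (PowerSeries.X : PowerSeries ℚ) e
  rw [stepS]
  linear_combination -this

/-- `q` is the coefficient function of a symmetric unimodal polynomial of degree `D`. -/
structure SymUni (q : ℤ → ℚ) (D : ℤ) : Prop where
  nonneg : ∀ j, 0 ≤ q j
  lo : ∀ j, j < 0 → q j = 0
  symmc : ∀ j, q j = q (D - j)
  step : ∀ k, 2 * k ≤ D + 1 → q (k - 1) ≤ q k

lemma SymUni.pair_aux {q : ℤ → ℚ} {D : ℤ} (h : SymUni q D) :
    ∀ (m : ℕ) (a b : ℤ), b ≤ a + m → a ≤ b → a + b ≤ D → q a ≤ q b := by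
  intro m
  induction m with
  | zero =>
    intro a b h1 h2 _
    have : a = b := le_antisymm h2 (by simpa using h1)
    simp [this]
  | succ m ih =>
    intro a b h1 h2 h3
    by_cases hb : b ≤ a + m
    · exact ih a b hb h2 h3
    · by_cases hc : 2 * b ≤ D + 1
      · rcases eq_or_lt_of_le h2 with rfl | hlt
        · exact le_refl _
        · have h4 : q a ≤ q (b - 1) := ih a (b - 1) (by omega) (by omega) (by omega)
          exact h4.trans (h.step b hc)
      · have hsym : q b = q (D - b) := h.symmc b
        rw [hsym]
        exact ih a (D - b) (by omega) (by omega) (by omega)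

lemma SymUni.pair {q : ℤ → ℚ} {D : ℤ} (h : SymUni q D) {a b : ℤ}
    (h2 : a ≤ b) (h3 : a + b ≤ D) : q a ≤ q b :=
  h.pair_aux (b - a).toNat a b (by omega) h2 h3

/-- Convolving with `1 + z + ⋯ + z^(e-1)` preserves symmetric unimodality. -/
lemma SymUni.conv {q : ℤ → ℚ} {D : ℤ} (h : SymUni q D) (e : ℕ) (he : 1 ≤ e) :
    SymUni (fun k => ∑ j ∈ Finset.range e, q (k - j)) (D + e - 1) := by
  constructor
  · intro k
    exact Finset.sum_nonneg fun j _ => h.nonneg _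
  · intro k hk
    refine Finset.sum_eq_zero fun j _ => h.lo _ (by omega)
  · intro k
    have reflect := Finset.sum_range_reflect (fun j : ℕ => q (D - k + j)) e
    calc ∑ j ∈ Finset.range e, q (k - j)
        = ∑ j ∈ Finset.range e, q (D - k + j) := by
          refine Finset.sum_congr rfl fun j _ => ?_
          rw [h.symmc (k - j)]
          ring_nf
      _ = ∑ j ∈ Finset.range e, q (D - k + (e - 1 - j : ℕ)) := reflect.symm
      _ = ∑ j ∈ Finset.range e, q (D + e - 1 - k - j) := by
          refine Finset.sum_congr rfl fun j hj => ?_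
          have hj' : j < e := Finset.mem_range.mp hj
          congr 1
          have : ((e - 1 - j : ℕ) : ℤ) = (e : ℤ) - 1 - j := by omega
          rw [this]; ring
  · intro k hk
    have key : (∑ j ∈ Finset.range e, q (k - 1 - j))
        = (∑ j ∈ Finset.range e, q (k - j)) + q (k - e) - q k := by
      have h1 : ∑ j ∈ Finset.range e, q (k - 1 - j)
          = ∑ j ∈ Finset.range e, (fun j : ℕ => q (k - j)) (j + 1) := by
        refine Finset.sum_congr rfl fun j _ => ?_
        congr 1
        push_cast
        ring
      have h2 := Finset.sum_range_succ' (fun j : ℕ => q (k - j)) e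
      have h3 := Finset.sum_range_succ (fun j : ℕ => q (k - j)) e
      rw [h1]
      simp only [Nat.cast_zero, sub_zero] at h2
      rw [h2] at h3
      linarith
    rw [key]
    have : q (k - e) ≤ q k := h.pair (by omega) (by omega)
    linarith

lemma symUni_one : SymUni (sq 1) 0 := by
  have hq : ∀ k : ℤ, sq 1 k = if k = 0 then 1 else 0 := by
    intro k
    rw [sq]
    by_cases hk : 0 ≤ k
    · rw [if_pos hk, PowerSeries.coeff_one]
      by_cases h0 : k = 0
      · rw [if_pos (by omega), if_pos h0]
      · rw [if_neg (by omega), if_neg h0]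
    · rw [if_neg hk, if_neg (by omega)]
  constructor
  · intro j; rw [hq]; split <;> norm_num
  · intro j hj; rw [hq, if_neg (by omega)]
  · intro j
    rw [hq, hq]
    by_cases h0 : j = 0
    · rw [if_pos h0, if_pos (by omega)]
    · rw [if_neg h0, if_neg (by omega)]
  · intro k hk
    rw [hq, hq, if_neg (by omega : ¬(k - 1 = 0))]
    split <;> norm_num

lemma symUni_prod {ι : Type*} [DecidableEq ι] (d : ι → ℕ) (hd : ∀ i, 1 ≤ d i)
    (s : Finset ι) :
    SymUni (sq (∏ i ∈ s, stepS (d i))) (∑ i ∈ s, ((d i : ℤ) - 1)) := by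
  induction s using Finset.induction_on with
  | empty => simpa using symUni_one
  | insert _ _ hnotmem ih =>
    rename_i a s'
    rw [Finset.prod_insert hnotmem, Finset.sum_insert hnotmem, mul_comm]
    have hc := ih.conv (d a) (hd a)
    have heq : (fun k => ∑ j ∈ Finset.range (d a), sq (∏ i ∈ s', stepS (d i)) (k - j))
        = sq ((∏ i ∈ s', stepS (d i)) * stepS (d a)) := by
      funext k
      rw [sq_mul_stepS]
    rw [heq] at hc
    have hDeq : (∑ i ∈ s', ((d i : ℤ) - 1)) + (d a) - 1
        = ((d a : ℤ) - 1) + ∑ i ∈ s', ((d i : ℤ) - 1) := by ring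
    rwa [hDeq] at hc

end SemiregularAux

open SemiregularAux in
/-- Let `d₁ ≤ ⋯ ≤ d_{n+1}` with `d_{n+1} ≤ d₁ + ⋯ + dₙ − n`. Then the truncated
series `[∏_{i=1}^{n+1}(1−z^{dᵢ})/(1−z)^n]` (the Hilbert series of a cryptographic
semi-regular sequence of these degrees) is a polynomial of degree at most
`⌊(d₁+⋯+d_{n+1}−n−1)/2⌋`; equivalently, the coefficient of `z^k` in
`∏(1−z^{dᵢ})/(1−z)^n` is non-positive for `k = ⌊(d₁+⋯+d_{n+1}−n−1)/2⌋ + 1`. -/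
theorem semiregular_hilbert_series_degree_bound (n : ℕ) (hn : 0 < n)
    (d : Fin (n + 1) → ℕ) (hd2 : ∀ i, 2 ≤ d i) (hmono : Monotone d)
    (hlast : d (Fin.last n) ≤ (∑ i : Fin n, d i.castSucc) - n) :
    PowerSeries.coeff (R := ℚ) (((∑ i : Fin (n + 1), d i) - n - 1) / 2 + 1)
        ((∏ i : Fin (n + 1), (1 - PowerSeries.X ^ (d i) : PowerSeries ℚ)) *
          ((1 - PowerSeries.X : PowerSeries ℚ) ^ n)⁻¹) ≤ 0 := by
  set σ : ℕ := ∑ i : Fin (n + 1), d i with hσdef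
  have hσ : 2 * (n + 1) ≤ σ := by
    have h := Finset.sum_le_sum (fun i (_ : i ∈ (Finset.univ : Finset (Fin (n+1)))) => hd2 i)
    simpa [mul_comm] using h
  set Q : PowerSeries ℚ := ∏ i : Fin (n + 1), stepS (d i) with hQdef
  -- the product identity
  have hprod : (∏ i : Fin (n + 1), (1 - PowerSeries.X ^ (d i) : PowerSeries ℚ))
      = (1 - PowerSeries.X : PowerSeries ℚ) ^ (n + 1) * Q := by
    rw [hQdef]
    rw [show ((1 - PowerSeries.X : PowerSeries ℚ) ^ (n + 1))
        = ∏ _i : Fin (n + 1), (1 - PowerSeries.X : PowerSeries ℚ) by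
      rw [Finset.prod_const, Finset.card_univ, Fintype.card_fin]]
    rw [← Finset.prod_mul_distrib]
    exact Finset.prod_congr rfl fun i _ => (one_sub_X_mul_stepS (d i)).symm
  -- invert (1-X)^n
  have hCunit : (PowerSeries.constantCoeff (R := ℚ)) ((1 - PowerSeries.X : PowerSeries ℚ) ^ n) ≠ 0 := by
    rw [map_pow, map_sub, map_one, PowerSeries.constantCoeff_X, sub_zero, one_pow]
    exact one_ne_zero
  have hinv : ((1 - PowerSeries.X : PowerSeries ℚ) ^ n)
      * ((1 - PowerSeries.X : PowerSeries ℚ) ^ n)⁻¹ = 1 :=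
    PowerSeries.mul_inv_cancel _ hCunit
  have hE : (∏ i : Fin (n + 1), (1 - PowerSeries.X ^ (d i) : PowerSeries ℚ)) *
        ((1 - PowerSeries.X : PowerSeries ℚ) ^ n)⁻¹
      = (1 - PowerSeries.X : PowerSeries ℚ) * Q := by
    rw [hprod, pow_succ]
    calc (1 - PowerSeries.X : PowerSeries ℚ) ^ n * (1 - PowerSeries.X) * Q *
          ((1 - PowerSeries.X : PowerSeries ℚ) ^ n)⁻¹
        = ((1 - PowerSeries.X : PowerSeries ℚ) ^ n *
            ((1 - PowerSeries.X : PowerSeries ℚ) ^ n)⁻¹) * ((1 - PowerSeries.X) * Q) := by ring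
      _ = (1 - PowerSeries.X : PowerSeries ℚ) * Q := by rw [hinv, one_mul]
  rw [hE]
  -- coefficient computation
  set m : ℕ := (σ - n - 1) / 2 with hmdef
  have hcoeff : PowerSeries.coeff (R := ℚ) (m + 1) ((1 - PowerSeries.X : PowerSeries ℚ) * Q)
      = PowerSeries.coeff (R := ℚ) (m + 1) Q - PowerSeries.coeff (R := ℚ) m Q := by
    rw [sub_mul, one_mul, map_sub, PowerSeries.coeff_succ_X_mul]
  rw [hcoeff]
  -- symmetric unimodality of Q
  have hsu : SymUni (sq Q) (∑ i : Fin (n + 1), ((d i : ℤ) - 1)) :=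
    symUni_prod d (fun i => le_trans (by norm_num) (hd2 i)) Finset.univ
  have hD : (∑ i : Fin (n + 1), ((d i : ℤ) - 1)) = (σ : ℤ) - (n + 1) := by
    rw [Finset.sum_sub_distrib, Finset.sum_const, Finset.card_univ, Fintype.card_fin,
      hσdef]
    push_cast
    ring
  rw [hD] at hsu
  set t : ℤ := (σ : ℤ) - (n + 1) with htdef
  have hm : 2 * (m : ℤ) ≤ t ∧ t ≤ 2 * (m : ℤ) + 1 := by
    constructor <;> · rw [hmdef, htdef]; omega
  -- the key inequality
  have hkey : sq Q ((m : ℤ) + 1) ≤ sq Q (m : ℤ) := by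
    have h1 : sq Q ((m : ℤ) + 1) = sq Q (t - ((m : ℤ) + 1)) := hsu.symmc _
    rw [h1]
    exact hsu.pair (by omega) (by omega)
  have e1 : sq Q ((m : ℤ) + 1) = PowerSeries.coeff (R := ℚ) (m + 1) Q := by
    rw [show ((m : ℤ) + 1) = ((m + 1 : ℕ) : ℤ) by push_cast; ring, sq_natCast]
  have e2 : sq Q (m : ℤ) = PowerSeries.coeff (R := ℚ) m Q := sq_natCast Q m
  rw [e1, e2] at hkey
  linarith
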